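/- Let G be a finite simple graph whose vertex set can be partitioned into at most 3 sets each inducing a clique in G (i.e., cp(G) ≤ 3). Then the graph Ĝ obtained from G by adding a universal vertex satisfies vsrc(Ĝ) ≤ 3. -/

import Mathlib

open SimpleGraph

/-- A very strong rainbow coloring: for every shortest path (a path whose length equals the
distance between its endpoints), all edges receive pairwise distinct colors. -/
def IsVSRC {V : Type*} (G : SimpleGraph V) (c : Sym2 V → ℕ) : Prop :=
  ∀ (u v : V) (p : G.Walk u v), p.IsPath → p.length = G.dist u v →
    (p.edges.map c).Nodup

/-- The graph Ĝ obtained from `G` by adding a new universal vertex (`none`). -/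
def hatGraph {V : Type*} (G : SimpleGraph V) : SimpleGraph (Option V) where
  Adj x y :=
    match x, y with
    | some u, some v => G.Adj u v
    | some _, none => True
    | none, some _ => True
    | none, none => False
  symm := by
    constructor
    rintro (_ | u) (_ | v) h <;> simp_all
    exact G.adj_symm h
  loopless := by
    constructor
    rintro (_ | u) h <;> simp_all

/-- The coloring function on ordered pairs. -/
def gfun {V : Type*} (f : V → Fin 3) : Option V → Option V → ℕ
  | none, none => 0
  | none, some v => (f v : ℕ)
  | some u, none => (f u : ℕ)
  | some u, some v => if f u = f v then (f u : ℕ) else 3 - (f u : ℕ) - (f v : ℕ)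

lemma gfun_symm {V : Type*} (f : V → Fin 3) (x y : Option V) :
    gfun f x y = gfun f y x := by
  rcases x with _ | u <;> rcases y with _ | v <;> simp [gfun]
  split_ifs with h1 h2 h2
  · exact congrArg Fin.val h1
  · exact absurd h1.symm h2
  · exact absurd h2.symm h1
  · omega

theorem stmt_8 {V : Type*} [Fintype V] (G : SimpleGraph V)
    (f : V → Fin 3) (hf : ∀ i : Fin 3, G.IsClique {v | f v = i}) :
    ∃ c : Sym2 (Option V) → ℕ, IsVSRC (hatGraph G) c ∧
      ∀ e ∈ (hatGraph G).edgeSet, c e < 3 := by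
  classical
  refine ⟨Sym2.lift ⟨gfun f, gfun_symm f⟩, ?_, ?_⟩
  · -- IsVSRC
    intro u v p hp hlen
    -- distance is at most 2
    have hd : (hatGraph G).dist u v ≤ 2 := by
      rcases u with _ | a <;> rcases v with _ | b
      · simp [SimpleGraph.dist_self]
      · have h1 : (hatGraph G).Adj none (some b) := trivial
        have := (hatGraph G).dist_le (Walk.cons h1 Walk.nil)
        simpa using this.trans (by norm_num)
      · have h1 : (hatGraph G).Adj (some a) none := trivial
        have := (hatGraph G).dist_le (Walk.cons h1 Walk.nil)
        simpa using this.trans (by norm_num)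
      · have h1 : (hatGraph G).Adj (some a) none := trivial
        have h2 : (hatGraph G).Adj none (some b) := trivial
        have := (hatGraph G).dist_le (Walk.cons h1 (Walk.cons h2 Walk.nil))
        simpa using this
    -- helper: pairs at distance 2 are nonadjacent
    cases p with
    | nil => simp
    | cons h1 q =>
      cases q with
      | nil => simp
      | cons h2 r =>
        cases r with
        | cons h3 s =>
          exfalso
          simp only [Walk.length_cons] at hlen
          omega
        | nil =>
          rename_i w
          simp only [Walk.length_cons, Walk.length_nil] at hlen
          have hdist : (hatGraph G).dist u v = 2 := hlen.symm
          have hne : u ≠ v := by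
            intro h; subst h; simp [SimpleGraph.dist_self] at hdist
          have hnadj : ¬ (hatGraph G).Adj u v := by
            intro h
            have := (hatGraph G).dist_le (Walk.cons h Walk.nil)
            simp [hdist] at this
          -- u and v must both be `some`
          rcases u with _ | a
          · rcases v with _ | b
            · exact absurd rfl hne
            · exact (hnadj trivial).elim
          rcases v with _ | b
          · exact (hnadj trivial).elim
          have hab : a ≠ b := fun h => hne (by rw [h])
          have hGnadj : ¬ G.Adj a b := hnadj
          have hfab : f a ≠ f b := by
            intro h
            exact hGnadj (hf (f a) (by simp) (by simp [h]) hab)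
          have hvab : (f a : ℕ) ≠ (f b : ℕ) := fun h => hfab (Fin.val_injective h)
          have ha3 := (f a).isLt
          have hb3 := (f b).isLt
          simp only [Walk.edges_cons, Walk.edges_nil, List.map_cons, List.map_nil,
            List.nodup_cons, List.mem_cons, List.not_mem_nil, or_false,
            List.nodup_nil, and_true, Sym2.lift_mk]
          rcases w with _ | m
          · -- middle vertex is the hub
            simpa [gfun] using hvab
          · -- middle vertex in V
            have hm3 := (f m).isLt
            simp only [gfun]
            refine ⟨?_, by trivial⟩
            split_ifs with e1 e2 e2
            · exact absurd (e1.trans e2) hfab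
            · have he1 := congrArg Fin.val e1
              have hvmb : (f m : ℕ) ≠ (f b : ℕ) := fun h => e2 (Fin.val_injective h)
              omega
            · have he2 := congrArg Fin.val e2
              have hvam : (f a : ℕ) ≠ (f m : ℕ) := fun h => e1 (Fin.val_injective h)
              omega
            · have hvam : (f a : ℕ) ≠ (f m : ℕ) := fun h => e1 (Fin.val_injective h)
              have hvmb : (f m : ℕ) ≠ (f b : ℕ) := fun h => e2 (Fin.val_injective h)
              omega
  · -- bound
    intro e he
    induction e with
    | h x y =>
      rw [SimpleGraph.mem_edgeSet] at he
      rcases x with _ | a <;> rcases y with _ | b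
      · exact absurd he (by simp [hatGraph])
      · simp [gfun, (f b).isLt]
      · simp [gfun, (f a).isLt]
      · have hG : G.Adj a b := he
        have hab : a ≠ b := hG.ne
        simp only [Sym2.lift_mk, gfun]
        split_ifs with h
        · exact (f a).isLt
        · have : (f a : ℕ) ≠ (f b : ℕ) := fun hh => h (Fin.val_injective hh)
          have := (f a).isLt
          have := (f b).isLt
          omega
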